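/- Assume κ = κ̂ and 0 < λ < 1, and denote by F_C and G_V the partial derivatives ∂F/∂C and ∂G/∂V at P₈ = (V₊, 1+V₊). Then F_C + G_V = C₈(n + 1 - ((γ+1)/(γ-1))μ) > 0, where C₈ = 1+V₊ and μ = λ-1. -/

import Mathlib

noncomputable section

/-- `V_* = (κ - 2(λ-1))/(nγ)` -/
def Vstar (n γ lam κ : ℝ) : ℝ := (κ - 2*(lam - 1)) / (n*γ)

/-- `α = (κ(γ-1) + 2(λ-1))/(2γ)` -/
def alphaP (γ lam κ : ℝ) : ℝ := (κ*(γ - 1) + 2*(lam - 1)) / (2*γ)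

/-- `k₁ = 1 + (n-1)(γ-1)/2` -/
def K1 (n γ : ℝ) : ℝ := 1 + (n - 1)*(γ - 1)/2

/-- `k₂ = ((n-1)(γ-1) + (γ-3)(λ-1))/2` -/
def K2 (n γ lam : ℝ) : ℝ := ((n - 1)*(γ - 1) + (γ - 3)*(lam - 1)) / 2

/-- `k₃ = (γ-1)(λ-1)/2` -/
def K3 (γ lam : ℝ) : ℝ := (γ - 1)*(lam - 1)/2

/-- `G(V,C) = nC²(V - V_*) - V(1+V)(λ+V)` -/
def Gf (n γ lam κ V C : ℝ) : ℝ := n*C^2*(V - Vstar n γ lam κ) - V*(1+V)*(lam+V)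

/-- `F(V,C) = C[C²(1 + α/(1+V)) - k₁(1+V)² + k₂(1+V) - k₃]` -/
def Ff (n γ lam κ V C : ℝ) : ℝ :=
  C*(C^2*(1 + alphaP γ lam κ/(1+V)) - K1 n γ*(1+V)^2 + K2 n γ lam*(1+V) - K3 γ lam)

/-- The isentropic exponent `κ̂ = 2(1-λ)/(γ-1)`. -/
def khat (γ lam : ℝ) : ℝ := 2*(1 - lam)/(γ - 1)

/-- `a = ((γ-3)/(m(γ-1)))μ - 1`, with `m = n-1`, `μ = λ-1`. -/
def aIs (n γ lam : ℝ) : ℝ := ((γ - 3)/((n-1)*(γ - 1)))*(lam - 1) - 1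

/-- `Q = ((γ-3)/(m(γ-1)))²μ² - 2((γ+1)/(m(γ-1)))μ + 1`. -/
def QIs (n γ lam : ℝ) : ℝ :=
  ((γ - 3)/((n-1)*(γ - 1)))^2*(lam - 1)^2 - 2*((γ + 1)/((n-1)*(γ - 1)))*(lam - 1) + 1

/-- `V₊ = (a + √Q)/2` in the isentropic case `κ = κ̂`. -/
def VpIs (n γ lam : ℝ) : ℝ := (aIs n γ lam + Real.sqrt (QIs n γ lam))/2

/-- `V₋ = (a - √Q)/2` in the isentropic case `κ = κ̂`. -/
def VmIs (n γ lam : ℝ) : ℝ := (aIs n γ lam - Real.sqrt (QIs n γ lam))/2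

/-- `F_C`: the partial derivative `∂F/∂C` at `P₈ = (V₊, 1+V₊)`, with `κ = κ̂`. -/
def FCd (n γ lam : ℝ) : ℝ :=
  deriv (fun C => Ff n γ lam (khat γ lam) (VpIs n γ lam) C) (1 + VpIs n γ lam)

/-- `F_V`: the partial derivative `∂F/∂V` at `P₈ = (V₊, 1+V₊)`, with `κ = κ̂`. -/
def FVd (n γ lam : ℝ) : ℝ :=
  deriv (fun V => Ff n γ lam (khat γ lam) V (1 + VpIs n γ lam)) (VpIs n γ lam)

/-- `G_C`: the partial derivative `∂G/∂C` at `P₈ = (V₊, 1+V₊)`, with `κ = κ̂`. -/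
def GCd (n γ lam : ℝ) : ℝ :=
  deriv (fun C => Gf n γ lam (khat γ lam) (VpIs n γ lam) C) (1 + VpIs n γ lam)

/-- `G_V`: the partial derivative `∂G/∂V` at `P₈ = (V₊, 1+V₊)`, with `κ = κ̂`. -/
def GVd (n γ lam : ℝ) : ℝ :=
  deriv (fun V => Gf n γ lam (khat γ lam) V (1 + VpIs n γ lam)) (VpIs n γ lam)

lemma deriv_cubic (p q r s x : ℝ) :
    deriv (fun y : ℝ => p*y^3 + q*y^2 + r*y + s) x = 3*p*x^2 + 2*q*x + r := by
  have h1 : HasDerivAt (fun y : ℝ => p*y^3) (p*(3*x^2)) x := by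
    have := (hasDerivAt_pow 3 x).const_mul p
    simpa using this
  have h2 : HasDerivAt (fun y : ℝ => q*y^2) (q*(2*x)) x := by
    have := (hasDerivAt_pow 2 x).const_mul q
    simpa using this
  have h3 : HasDerivAt (fun y : ℝ => r*y) (r*1) x := (hasDerivAt_id x).const_mul r
  have h := ((h1.add h2).add h3).add_const s
  rw [(show HasDerivAt (fun y : ℝ => p*y^3 + q*y^2 + r*y + s)
      (p*(3*x^2) + q*(2*x) + r*1) x from h).deriv]; ring

lemma alphaP_khat (γ lam : ℝ) (hγ : γ - 1 ≠ 0) : alphaP γ lam (khat γ lam) = 0 := by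
  have h : khat γ lam * (γ - 1) + 2*(lam - 1) = 0 := by
    unfold khat; field_simp; ring
  unfold alphaP; rw [h]; exact zero_div _

lemma FCd_eq (n γ lam : ℝ) (hγ : γ - 1 ≠ 0) :
    FCd n γ lam = (3 - K1 n γ)*(1+VpIs n γ lam)^2 + K2 n γ lam*(1+VpIs n γ lam) - K3 γ lam := by
  have hα := alphaP_khat γ lam hγ
  unfold FCd
  have hf : (fun C => Ff n γ lam (khat γ lam) (VpIs n γ lam) C)
      = fun C : ℝ => 1*C^3 + 0*C^2
          + (- (K1 n γ*(1+VpIs n γ lam)^2) + K2 n γ lam*(1+VpIs n γ lam) - K3 γ lam)*C + 0 := by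
    funext C; rw [Ff, hα]; ring
  rw [hf, deriv_cubic]; ring

lemma GVd_eq (n γ lam : ℝ) :
    GVd n γ lam = n*(1+VpIs n γ lam)^2 - (3*(VpIs n γ lam)^2 + 2*(1+lam)*(VpIs n γ lam) + lam) := by
  unfold GVd
  have hf : (fun V => Gf n γ lam (khat γ lam) V (1 + VpIs n γ lam))
      = fun V : ℝ => (-1)*V^3 + (-(1+lam))*V^2 + (n*(1+VpIs n γ lam)^2 - lam)*V
          + (-(n*(1+VpIs n γ lam)^2) * Vstar n γ lam (khat γ lam)) := by
    funext V; rw [Gf]; ring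
  rw [hf, deriv_cubic]; ring

set_option maxHeartbeats 1000000 in
/-- with `κ = κ̂` and `0 < λ < 1`, at `P₈ = (V₊, 1+V₊)`:
`F_C + G_V = C₈(n + 1 - ((γ+1)/(γ-1))μ) > 0`, where `μ = λ - 1`. -/
theorem stmt_15 (n γ lam : ℝ) (hn : n = 2 ∨ n = 3) (hγ : 1 < γ)
    (h0 : 0 < lam) (h1 : lam < 1) :
    let C8 := 1 + VpIs n γ lam
    FCd n γ lam + GVd n γ lam = C8*(n + 1 - ((γ+1)/(γ-1))*(lam - 1)) ∧
    0 < FCd n γ lam + GVd n γ lam := by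
  intro C8
  have hγ1 : γ - 1 ≠ 0 := by intro h; nlinarith
  have hγ0 : (0:ℝ) < γ - 1 := by linarith
  have hdp : 0 < (γ+1)/(γ-1) := div_pos (by linarith) hγ0
  rcases hn with rfl | rfl
  · have hQ : 0 < QIs 2 γ lam := by
      unfold QIs
      have hd : 0 < (γ+1)/((2-1)*(γ-1)) :=
        div_pos (by linarith) (mul_pos (by norm_num) hγ0)
      nlinarith [sq_nonneg (((γ-3)/((2-1)*(γ-1)))*(lam-1)),
        mul_pos hd (show 0 < 1 - lam by linarith)]
    set s := Real.sqrt (QIs 2 γ lam) with hsdef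
    have hs0 : 0 ≤ s := Real.sqrt_nonneg _
    have hs2 : s^2 * (γ-1)^2 = (γ-3)^2*(lam-1)^2 - 2*(γ+1)*(lam-1)*(γ-1) + (γ-1)^2 := by
      rw [hsdef, Real.sq_sqrt hQ.le]; unfold QIs; field_simp; ring
    set A := aIs 2 γ lam with hAdef
    have ha : (γ-1) * A = (γ-3)*(lam-1) - (γ-1) := by
      rw [hAdef]; unfold aIs; field_simp; ring
    set V := VpIs 2 γ lam with hVdef
    have hVAs : V = (A + s)/2 := by rw [hVdef]; unfold VpIs; rw [← hsdef, ← hAdef]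
    have hV2' : (γ-1)*((γ-1)*V^2 - ((γ-3)*(lam-1) - (γ-1))*V + 2*(lam-1)) = (γ-1) * 0 := by
      rw [hVAs]
      linear_combination (1/4)*hs2 + (((γ-1)*A + 2*(γ-1)*s - ((γ-3)*(lam-1)-(γ-1)))/4) * ha
    have hV2 : (γ-1)*V^2 - ((γ-3)*(lam-1) - (γ-1))*V + 2*(lam-1) = 0 :=
      mul_left_cancel₀ hγ1 hV2'
    have hkey : ((γ-1)*(A+2))^2 < ((γ-1)*s)^2 := by
      nlinarith [hs2, ha, mul_pos (mul_pos hγ0 hγ0) (show 0 < 1 - lam by linarith),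
        sq_nonneg ((γ-1)*A)]
    have hC8 : 0 < 1 + V := by
      rw [hVAs]
      nlinarith [hkey, mul_nonneg hγ0.le hs0, hγ0, sq_nonneg ((γ-1)*(A+2) + (γ-1)*s)]
    have hmain : FCd 2 γ lam + GVd 2 γ lam = (1+V)*(2+1 - ((γ+1)/(γ-1))*(lam-1)) := by
      rw [FCd_eq 2 γ lam hγ1, GVd_eq, ← hVdef]
      unfold K1 K2 K3
      field_simp
      linear_combination (3-γ) * hV2
    have hT : 0 < (2:ℝ)+1 - ((γ+1)/(γ-1))*(lam-1) := by
      nlinarith [mul_pos hdp (show 0 < 1 - lam by linarith)]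
    exact ⟨hmain, by rw [hmain]; exact mul_pos hC8 hT⟩
  · have hQ : 0 < QIs 3 γ lam := by
      unfold QIs
      have hd : 0 < (γ+1)/((3-1)*(γ-1)) :=
        div_pos (by linarith) (mul_pos (by norm_num) hγ0)
      nlinarith [sq_nonneg (((γ-3)/((3-1)*(γ-1)))*(lam-1)),
        mul_pos hd (show 0 < 1 - lam by linarith)]
    set s := Real.sqrt (QIs 3 γ lam) with hsdef
    have hs0 : 0 ≤ s := Real.sqrt_nonneg _
    have hs2 : s^2 * (2*(γ-1))^2
        = (γ-3)^2*(lam-1)^2 - 2*(γ+1)*(lam-1)*(2*(γ-1)) + (2*(γ-1))^2 := by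
      rw [hsdef, Real.sq_sqrt hQ.le]; unfold QIs; field_simp; ring
    set A := aIs 3 γ lam with hAdef
    have ha : 2*(γ-1) * A = (γ-3)*(lam-1) - 2*(γ-1) := by
      rw [hAdef]; unfold aIs; field_simp; ring
    set V := VpIs 3 γ lam with hVdef
    have hVAs : V = (A + s)/2 := by rw [hVdef]; unfold VpIs; rw [← hsdef, ← hAdef]
    have hV2' : (2*(γ-1))*((2*(γ-1))*V^2 - ((γ-3)*(lam-1) - 2*(γ-1))*V + 2*(lam-1))
        = (2*(γ-1)) * 0 := by
      rw [hVAs]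
      linear_combination (1/4)*hs2
        + ((2*(γ-1)*A + 2*(2*(γ-1))*s - ((γ-3)*(lam-1)-2*(γ-1)))/4) * ha
    have hV2 : (2*(γ-1))*V^2 - ((γ-3)*(lam-1) - 2*(γ-1))*V + 2*(lam-1) = 0 :=
      mul_left_cancel₀ (by intro h; nlinarith) hV2'
    have hkey : ((2*(γ-1))*(A+2))^2 < ((2*(γ-1))*s)^2 := by
      nlinarith [hs2, ha, mul_pos (mul_pos hγ0 hγ0) (show 0 < 1 - lam by linarith),
        sq_nonneg (2*(γ-1)*A)]
    have hC8 : 0 < 1 + V := by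
      rw [hVAs]
      nlinarith [hkey, mul_nonneg hγ0.le hs0, hγ0, sq_nonneg ((2*(γ-1))*(A+2) + (2*(γ-1))*s)]
    have hmain : FCd 3 γ lam + GVd 3 γ lam = (1+V)*(3+1 - ((γ+1)/(γ-1))*(lam-1)) := by
      rw [FCd_eq 3 γ lam hγ1, GVd_eq, ← hVdef]
      unfold K1 K2 K3
      field_simp
      linear_combination (3-γ) * hV2
    have hT : 0 < (3:ℝ)+1 - ((γ+1)/(γ-1))*(lam-1) := by
      nlinarith [mul_pos hdp (show 0 < 1 - lam by linarith)]
    exact ⟨hmain, by rw [hmain]; exact mul_pos hC8 hT⟩
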